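/- Let q ≥ 3 be an integer and Γ_q the Hecke triangle group in SL(2,ℝ). Let h ∈ Γ_q satisfy h • ∞ > h • 0 ≥ 0 in ℝ ∪ {∞} (with the convention r < ∞ for all r ∈ ℝ). Then there exist unique ℓ ∈ ℕ₀ and k₁, …, k_ℓ ∈ {1, …, q−1} such that h = p_{k₁} ⋯ p_{k_ℓ} or h = −p_{k₁} ⋯ p_{k_ℓ} (the empty product being the identity matrix). -/

import Mathlib

noncomputable section

open OnePoint

abbrev SL2 := Matrix.SpecialLinearGroup (Fin 2) ℝ

/-- `S = [[0,1],[−1,0]] ∈ SL(2,ℝ)`. -/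
def Smat : SL2 := ⟨!![0, 1; -1, 0], by norm_num [Matrix.det_fin_two_of]⟩

/-- `T_q = [[1, λ_q],[0,1]] ∈ SL(2,ℝ)` where `λ_q = 2cos(π/q)`. -/
def Tmat (q : ℕ) : SL2 :=
  ⟨!![1, 2 * Real.cos (Real.pi / q); 0, 1], by norm_num [Matrix.det_fin_two_of]⟩

/-- The Hecke triangle group `Γ_q ≤ SL(2,ℝ)`, generated by `S` and `T_q`. -/
def Hecke (q : ℕ) : Subgroup SL2 := Subgroup.closure {Smat, Tmat q}

/-- The matrix `p_k = (1/sin(π/q)) · [[sin(kπ/q), sin((k+1)π/q)], [sin((k−1)π/q), sin(kπ/q)]]`. -/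
def pMat (q : ℕ) (k : ℤ) : Matrix (Fin 2) (Fin 2) ℝ :=
  (Real.sin (Real.pi / q))⁻¹ •
    !![Real.sin ((k : ℝ) * Real.pi / q), Real.sin (((k : ℝ) + 1) * Real.pi / q);
       Real.sin (((k : ℝ) - 1) * Real.pi / q), Real.sin ((k : ℝ) * Real.pi / q)]

/-- The Möbius action of `SL(2,ℝ)` on `ℝ ∪ {∞}`:
`[[a,b],[c,d]] • x = (ax+b)/(cx+d)` for `x ∈ ℝ` with `cx+d ≠ 0`, `= ∞` if `cx+d = 0`;
`[[a,b],[c,d]] • ∞ = a/c` if `c ≠ 0` and `= ∞` if `c = 0`. -/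
def mob (g : SL2) (x : OnePoint ℝ) : OnePoint ℝ :=
  match x with
  | OnePoint.some r =>
      if g.1 1 0 * r + g.1 1 1 = 0 then ∞
      else (((g.1 0 0 * r + g.1 0 1) / (g.1 1 0 * r + g.1 1 1) : ℝ) : OnePoint ℝ)
  | OnePoint.infty =>
      if g.1 1 0 = 0 then ∞ else ((g.1 0 0 / g.1 1 0 : ℝ) : OnePoint ℝ)

/-- The strict order on `ℝ ∪ {∞}` extending that of `ℝ` by `r < ∞` for every `r ∈ ℝ`. -/
def opLT : OnePoint ℝ → OnePoint ℝ → Prop :=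
  fun u v =>
    match u, v with
    | OnePoint.some r, OnePoint.some s => r < s
    | OnePoint.some _, OnePoint.infty => True
    | OnePoint.infty, _ => False

/-- The order on `ℝ ∪ {∞}` extending that of `ℝ` by `r < ∞` for every `r ∈ ℝ`. -/
def opLE (u v : OnePoint ℝ) : Prop := u = v ∨ opLT u v


namespace St11
open Real

/-- `sin (x π / q)` -/
def sq (q : ℕ) (x : ℝ) : ℝ := Real.sin (x * Real.pi / q)

/-- real-indexed version of `pMat` -/
def Pm (q : ℕ) (x : ℝ) : Matrix (Fin 2) (Fin 2) ℝ :=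
  (Real.sin (Real.pi / q))⁻¹ • !![sq q x, sq q (x+1); sq q (x-1), sq q x]

def Sm : Matrix (Fin 2) (Fin 2) ℝ := !![0, 1; -1, 0]

variable {q : ℕ}

lemma sigma_pos (hq : 3 ≤ q) : 0 < Real.sin (Real.pi / q) := by
  have hq0 : (0:ℝ) < q := by positivity
  apply Real.sin_pos_of_pos_of_lt_pi
  · positivity
  · apply div_lt_self Real.pi_pos
    exact_mod_cast by omega

lemma sq_pos (hq : 3 ≤ q) {x : ℝ} (h1 : 0 < x) (h2 : x < q) : 0 < sq q x := by
  have hq0 : (0:ℝ) < q := by positivity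
  apply Real.sin_pos_of_pos_of_lt_pi
  · positivity
  · rw [div_lt_iff₀ hq0]
    nlinarith [Real.pi_pos]

lemma sq_nonneg' (hq : 3 ≤ q) {x : ℝ} (h1 : 0 ≤ x) (h2 : x ≤ q) : 0 ≤ sq q x := by
  have hq0 : (0:ℝ) < q := by positivity
  apply Real.sin_nonneg_of_nonneg_of_le_pi
  · positivity
  · rw [div_le_iff₀ hq0]
    nlinarith [Real.pi_pos]

/-- the master product identity -/
lemma Gid (q : ℕ) (x y : ℝ) :
    sq q (x+1) * sq q y - sq q x * sq q (y-1) = Real.sin (Real.pi / q) * sq q (x+y) := by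
  unfold sq
  rw [show (x+1) * Real.pi / q = x * Real.pi / q + Real.pi / q by ring,
      show (y-1) * Real.pi / q = y * Real.pi / q - Real.pi / q by ring,
      show (x+y) * Real.pi / q = x * Real.pi / q + y * Real.pi / q by ring,
      Real.sin_add, Real.sin_sub, Real.sin_add]
  ring

/-- determinant identity -/
lemma det_id (q : ℕ) (x : ℝ) :
    sq q x ^ 2 - sq q (x+1) * sq q (x-1) = Real.sin (Real.pi / q) ^ 2 := by
  unfold sq
  rw [show (x+1) * Real.pi / q = x * Real.pi / q + Real.pi / q by ring,
      show (x-1) * Real.pi / q = x * Real.pi / q - Real.pi / q by ring,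
      Real.sin_add, Real.sin_sub]
  nlinarith [Real.sin_sq_add_cos_sq (x * Real.pi / q), Real.sin_sq_add_cos_sq (Real.pi / q)]

/-- the star identity -/
lemma star (hq : 3 ≤ q) (x y : ℝ) : Pm q x * Sm * Pm q y = -Pm q (x+y) := by
  have hσ : Real.sin (Real.pi / q) ≠ 0 := ne_of_gt (sigma_pos hq)
  have e1 := Gid q x y
  have e2 := Gid q x (y+1)
  rw [show y+1-1 = y from by ring, show x+(y+1) = x+y+1 from by ring] at e2
  have e3 := Gid q (x-1) y
  rw [show x-1+1 = x from by ring, show x-1+y = x+y-1 from by ring] at e3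
  have e4 := Gid q (x-1) (y+1)
  rw [show x-1+1 = x from by ring, show y+1-1 = y from by ring,
      show x-1+(y+1) = x+y from by ring] at e4
  ext i j
  fin_cases i <;> fin_cases j <;>
    · simp only [Pm, Sm, Matrix.smul_mul, Matrix.mul_smul, Matrix.smul_apply,
        Matrix.neg_apply, smul_eq_mul]
      rw [show (!![sq q x, sq q (x+1); sq q (x-1), sq q x] : Matrix (Fin 2) (Fin 2) ℝ) *
            !![0, 1; -1, 0] * !![sq q y, sq q (y+1); sq q (y-1), sq q y] =
          !![-(sq q (x+1)) * sq q y + sq q x * sq q (y-1),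
             -(sq q (x+1)) * sq q (y+1) + sq q x * sq q y;
             -(sq q x) * sq q y + sq q (x-1) * sq q (y-1),
             -(sq q x) * sq q (y+1) + sq q (x-1) * sq q y] from by
        rw [Matrix.mul_fin_two, Matrix.mul_fin_two]; norm_num]
      simp only [Matrix.of_apply, Matrix.cons_val', Matrix.cons_val_zero, Matrix.cons_val_one,
        Matrix.empty_val', Matrix.cons_val_fin_one, Fin.zero_eta, Fin.mk_one]
      field_simp
      first
      | linear_combination (-1) * e1
      | linear_combination (-1) * e2
      | linear_combination (-1) * e3
      | linear_combination (-1) * e4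

lemma sq_shift (hq : 3 ≤ q) (x : ℝ) : sq q (x + q) = -sq q x := by
  have hq0 : (q:ℝ) ≠ 0 := by positivity
  unfold sq
  rw [show (x + q) * Real.pi / q = x * Real.pi / q + Real.pi from by field_simp; try ring
        ,
      Real.sin_add]
  simp

lemma neg22 (a b c d : ℝ) : -(!![a,b;c,d]) = !![-a,-b;-c,-d] := by
  ext i j; fin_cases i <;> fin_cases j <;> simp

lemma Pm_qq (hq : 3 ≤ q) : Pm q q = -Sm := by
  have hσ : Real.sin (Real.pi / q) ≠ 0 := ne_of_gt (sigma_pos hq)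
  have hq0 : (q:ℝ) ≠ 0 := by positivity
  have h1 : sq q q = 0 := by
    unfold sq; rw [show (q:ℝ) * Real.pi / q = Real.pi from by field_simp; try ring
        , Real.sin_pi]
  have h2 : sq q ((q:ℝ)+1) = -Real.sin (Real.pi / q) := by
    unfold sq
    rw [show ((q:ℝ)+1) * Real.pi / q = Real.pi + Real.pi / q from by field_simp; try ring
        ,
        Real.sin_add]
    simp
  have h3 : sq q ((q:ℝ)-1) = Real.sin (Real.pi / q) := by
    unfold sq
    rw [show ((q:ℝ)-1) * Real.pi / q = Real.pi - Real.pi / q from by field_simp; try ring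
        ,
        Real.sin_pi_sub]
  unfold Pm Sm
  rw [h1, h2, h3]
  ext i j
  fin_cases i <;> fin_cases j <;> simp [Matrix.smul_apply, Matrix.neg_apply]
  all_goals field_simp

lemma Pm_shift (hq : 3 ≤ q) (x : ℝ) : Pm q (x + q) = -Pm q x := by
  unfold Pm
  rw [show x + (q:ℝ) + 1 = (x+1) + q from by ring, show x + (q:ℝ) - 1 = (x-1) + q from by ring,
      sq_shift hq, sq_shift hq, sq_shift hq, ← smul_neg, neg22]

/-- explicit inverse of `Pm` -/
def Pinv (q : ℕ) (x : ℝ) : Matrix (Fin 2) (Fin 2) ℝ :=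
  (Real.sin (Real.pi / q))⁻¹ • !![sq q x, -sq q (x+1); -sq q (x-1), sq q x]

lemma Pinv_mul (hq : 3 ≤ q) (x : ℝ) : Pinv q x * Pm q x = 1 := by
  have hσ : Real.sin (Real.pi / q) ≠ 0 := ne_of_gt (sigma_pos hq)
  have hd := det_id q x
  unfold Pinv Pm
  rw [Matrix.smul_mul, Matrix.mul_smul, Matrix.mul_fin_two, smul_smul]
  rw [show sq q x * sq q (x+1) + -sq q (x+1) * sq q x = 0 from by ring,
      show -sq q (x-1) * sq q x + sq q x * sq q (x-1) = 0 from by ring,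
      show sq q x * sq q x + -sq q (x+1) * sq q (x-1) = Real.sin (Real.pi / q) ^ 2 from by
        linear_combination hd,
      show -sq q (x-1) * sq q (x+1) + sq q x * sq q x = Real.sin (Real.pi / q) ^ 2 from by
        linear_combination hd]
  ext i j
  fin_cases i <;> fin_cases j <;>
    simp [Matrix.smul_apply, Matrix.one_apply] <;> field_simp <;> ring

lemma Sm_sq : Sm * Sm = -1 := by
  ext i j
  fin_cases i <;> fin_cases j <;>
    simp [Sm, Matrix.mul_apply, Fin.sum_univ_two, Matrix.one_apply]

variable (q : ℕ)

lemma pMat_nat (k : ℕ) : pMat q (k : ℤ) = Pm q (k : ℝ) := by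
  simp [pMat, Pm, sq]

lemma pMat_int (k : ℤ) : pMat q k = Pm q (k : ℝ) := by
  simp [pMat, Pm, sq]

def Pp (L : List ℕ) : Matrix (Fin 2) (Fin 2) ℝ := (L.map (fun k => pMat q (k : ℤ))).prod

def valid (L : List ℕ) : Prop := ∀ k ∈ L, 1 ≤ k ∧ k ≤ q - 1

variable {q}

lemma Pp_nil : Pp q [] = 1 := rfl

lemma Pp_cons (k : ℕ) (L : List ℕ) : Pp q (k :: L) = pMat q (k:ℤ) * Pp q L := by
  simp [Pp]

lemma Pp_append (L₁ L₂ : List ℕ) : Pp q (L₁ ++ L₂) = Pp q L₁ * Pp q L₂ := by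
  simp [Pp]

lemma mul_ent (A B : Matrix (Fin 2) (Fin 2) ℝ) (i j : Fin 2) :
    (A*B) i j = A i 0 * B 0 j + A i 1 * B 1 j := by
  rw [Matrix.mul_apply, Fin.sum_univ_two]

lemma Pm00 (x : ℝ) : Pm q x 0 0 = (Real.sin (Real.pi / q))⁻¹ * sq q x := by simp [Pm]
lemma Pm01 (x : ℝ) : Pm q x 0 1 = (Real.sin (Real.pi / q))⁻¹ * sq q (x+1) := by simp [Pm]
lemma Pm10 (x : ℝ) : Pm q x 1 0 = (Real.sin (Real.pi / q))⁻¹ * sq q (x-1) := by simp [Pm]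
lemma Pm11 (x : ℝ) : Pm q x 1 1 = (Real.sin (Real.pi / q))⁻¹ * sq q x := by simp [Pm]

/-- positivity pattern of matrices -/
def Pos (m : Matrix (Fin 2) (Fin 2) ℝ) : Prop :=
  0 < m 0 0 ∧ 0 ≤ m 0 1 ∧ 0 ≤ m 1 0 ∧ 0 < m 1 1

section PosLemmas

variable (hq : 3 ≤ q) {k : ℕ} (h1 : 1 ≤ k) (h2 : k ≤ q - 1)
include hq h1 h2

lemma sqk_pos : 0 < sq q (k:ℝ) := by
  apply sq_pos hq
  · exact_mod_cast h1.trans_lt' (by norm_num)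
  · exact_mod_cast by omega

lemma sqk1_nonneg : 0 ≤ sq q ((k:ℝ)+1) := by
  apply sq_nonneg' hq (by positivity)
  have : k + 1 ≤ q := by omega
  calc (k:ℝ) + 1 = ((k+1 : ℕ) : ℝ) := by push_cast; ring
    _ ≤ q := by exact_mod_cast this

lemma sqkm1_nonneg : 0 ≤ sq q ((k:ℝ)-1) := by
  apply sq_nonneg' hq
  · have : (1:ℝ) ≤ (k:ℝ) := by exact_mod_cast h1
    linarith
  · have : (k:ℝ) ≤ q := by exact_mod_cast by omega
    linarith

end PosLemmas

lemma Pos_one : Pos (1 : Matrix (Fin 2) (Fin 2) ℝ) := by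
  refine ⟨?_, ?_, ?_, ?_⟩ <;> simp [Matrix.one_apply]

lemma Pos_pMat_mul (hq : 3 ≤ q) {k : ℕ} (h1 : 1 ≤ k) (h2 : k ≤ q - 1)
    {N : Matrix (Fin 2) (Fin 2) ℝ} (hN : Pos N) : Pos (pMat q (k:ℤ) * N) := by
  have hσ : 0 < (Real.sin (Real.pi / q))⁻¹ := inv_pos.mpr (sigma_pos hq)
  have e0 := sqk_pos hq h1 h2
  have e1 := sqk1_nonneg hq h1 h2
  have em := sqkm1_nonneg hq h1 h2
  obtain ⟨ha, hb, hc, hd⟩ := hN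
  rw [pMat_nat]
  refine ⟨?_, ?_, ?_, ?_⟩ <;>
    rw [mul_ent] <;>
    [rw [Pm00, Pm01]; rw [Pm00, Pm01]; rw [Pm10, Pm11]; rw [Pm10, Pm11]]
  · have := mul_pos (mul_pos hσ e0) ha
    have := mul_nonneg (mul_nonneg hσ.le e1) hc
    nlinarith
  · have := mul_nonneg (mul_nonneg hσ.le e0.le) hb
    have := mul_nonneg (mul_nonneg hσ.le e1) hd.le
    nlinarith
  · have := mul_nonneg (mul_nonneg hσ.le em) ha.le
    have := mul_nonneg (mul_nonneg hσ.le e0.le) hc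
    nlinarith
  · have := mul_nonneg (mul_nonneg hσ.le em) hb
    have := mul_pos (mul_pos hσ e0) hd
    nlinarith

lemma Pos_Pp (hq : 3 ≤ q) {L : List ℕ} (hL : valid q L) : Pos (Pp q L) := by
  induction L with
  | nil => exact Pos_one
  | cons k L ih =>
      rw [Pp_cons]
      have hk := hL k (by simp)
      exact Pos_pMat_mul hq hk.1 hk.2 (ih (fun j hj => hL j (by simp [hj])))

lemma offdiag_pos (hq : 3 ≤ q) {L : List ℕ} (hL : valid q L) (hne : L ≠ []) :
    0 < Pp q L 0 1 + Pp q L 1 0 := by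
  induction L with
  | nil => exact absurd rfl hne
  | cons k L ih =>
      have hk := hL k (by simp)
      have hLt : valid q L := fun j hj => hL j (by simp [hj])
      have hσ : 0 < (Real.sin (Real.pi / q))⁻¹ := inv_pos.mpr (sigma_pos hq)
      have e0 := sqk_pos hq hk.1 hk.2
      have e1 := sqk1_nonneg hq hk.1 hk.2
      have em := sqkm1_nonneg hq hk.1 hk.2
      obtain ⟨ha, hb, hc, hd⟩ := Pos_Pp hq hLt
      rw [Pp_cons, pMat_nat]
      rw [mul_ent, mul_ent, Pm00, Pm01, Pm10, Pm11]
      rcases List.eq_nil_or_concat L with h | h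
      · -- L = [], single letter: entries are s_{k+1}, s_{k-1}, one of them positive
        subst h
        have h1 : Pp q [] 0 1 = 0 := by rw [Pp_nil]; simp [Matrix.one_apply]
        have h10 : Pp q [] 1 0 = 0 := by rw [Pp_nil]; simp [Matrix.one_apply]
        have h00 : Pp q [] 0 0 = 1 := by rw [Pp_nil]; simp [Matrix.one_apply]
        have h11 : Pp q [] 1 1 = 1 := by rw [Pp_nil]; simp [Matrix.one_apply]
        rw [h1, h10, h00, h11]
        rcases Nat.lt_or_ge k (q-1) with hlt | hge
        · -- k ≤ q-2 : s_{k+1} > 0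
          have : 0 < sq q ((k:ℝ)+1) := by
            apply sq_pos hq (by positivity)
            have : k + 1 < q := by omega
            calc (k:ℝ) + 1 = ((k+1 : ℕ) : ℝ) := by push_cast; ring
              _ < q := by exact_mod_cast this
          nlinarith
        · -- k = q-1 : s_{k-1} > 0
          have hk' : k = q - 1 := le_antisymm hk.2 hge
          have : 0 < sq q ((k:ℝ)-1) := by
            apply sq_pos hq
            · have : (2:ℝ) ≤ (k:ℝ) := by exact_mod_cast by omega
              linarith
            · have : (k:ℝ) ≤ q := by exact_mod_cast by omega
              linarith
          nlinarith
      · -- L nonempty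
        have hLne : L ≠ [] := by rcases h with ⟨L', a, rfl⟩; simp
        have hoff := ih hLt hLne
        have t1 := mul_nonneg (mul_nonneg hσ.le e1) hd.le
        have t2 := mul_nonneg (mul_nonneg hσ.le em) ha.le
        have t3 : 0 < (Real.sin (Real.pi / q))⁻¹ * sq q (k:ℝ) * (Pp q L 0 1 + Pp q L 1 0) :=
          mul_pos (mul_pos hσ e0) hoff
        nlinarith

/-- `S^δ` for a boolean δ -/
def Smb (b : Bool) : Matrix (Fin 2) (Fin 2) ℝ := cond b Sm 1

/-- normal form: `± S^δ p_{k₁}⋯p_{k_ℓ} S^δ'` -/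
def NF (q : ℕ) (m : Matrix (Fin 2) (Fin 2) ℝ) : Prop :=
  ∃ (δ δ' : Bool) (L : List ℕ), valid q L ∧
    (m = Smb δ * Pp q L * Smb δ' ∨ m = -(Smb δ * Pp q L * Smb δ'))

lemma Pp_concat (L : List ℕ) (a : ℕ) : Pp q (L.concat a) = Pp q L * pMat q (a:ℤ) := by
  rw [List.concat_eq_append, Pp_append]
  simp [Pp]

lemma NF_neg {m} (h : NF q m) : NF q (-m) := by
  obtain ⟨δ, δ', L, hL, h | h⟩ := h
  · exact ⟨δ, δ', L, hL, Or.inr (by rw [h])⟩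
  · exact ⟨δ, δ', L, hL, Or.inl (by rw [h, neg_neg])⟩

lemma Sm_mul_form (P A : Matrix (Fin 2) (Fin 2) ℝ) :
    Sm * (Smb false * P * A) = Smb true * P * A := by
  simp [Smb, ← mul_assoc]

lemma Sm_mul_form' (P A : Matrix (Fin 2) (Fin 2) ℝ) :
    Sm * (Smb true * P * A) = -(Smb false * P * A) := by
  simp only [Smb, cond_true, cond_false, ← mul_assoc, Sm_sq]
  simp

lemma form_mul_Sm (A P : Matrix (Fin 2) (Fin 2) ℝ) :
    (A * P * Smb false) * Sm = A * P * Smb true := by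
  simp [Smb, mul_assoc]

lemma form_mul_Sm' (A P : Matrix (Fin 2) (Fin 2) ℝ) :
    (A * P * Smb true) * Sm = -(A * P * Smb false) := by
  simp only [Smb, cond_true, cond_false, mul_assoc, Sm_sq]
  simp

lemma NF_Sm_mul {m} (h : NF q m) : NF q (Sm * m) := by
  obtain ⟨δ, δ', L, hL, h | h⟩ := h <;> subst h <;> cases δ
  · exact ⟨true, δ', L, hL, Or.inl (Sm_mul_form _ _)⟩
  · exact ⟨false, δ', L, hL, Or.inr (Sm_mul_form' _ _)⟩
  · rw [mul_neg]
    exact ⟨true, δ', L, hL, Or.inr (by rw [Sm_mul_form])⟩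
  · rw [mul_neg, Sm_mul_form', neg_neg]
    exact ⟨false, δ', L, hL, Or.inl rfl⟩

lemma NF_mul_Sm {m} (h : NF q m) : NF q (m * Sm) := by
  obtain ⟨δ, δ', L, hL, h | h⟩ := h <;> subst h <;> cases δ'
  · exact ⟨δ, true, L, hL, Or.inl (form_mul_Sm _ _)⟩
  · exact ⟨δ, false, L, hL, Or.inr (form_mul_Sm' _ _)⟩
  · rw [neg_mul]
    exact ⟨δ, true, L, hL, Or.inr (by rw [form_mul_Sm])⟩
  · rw [neg_mul, form_mul_Sm', neg_neg]
    exact ⟨δ, false, L, hL, Or.inl rfl⟩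

/-- the key reduction: a product `P · S · P'` of p-words with an `S` inbetween is in
normal form -/
lemma keyred (hq : 3 ≤ q) :
    ∀ n (L L' : List ℕ), L.length ≤ n → valid q L → valid q L' →
      NF q (Pp q L * Sm * Pp q L') := by
  intro n
  induction n with
  | zero =>
      intro L L' hlen hL hL'
      rw [List.length_eq_zero_iff.mp (Nat.le_zero.mp hlen), Pp_nil, one_mul]
      exact ⟨true, false, L', hL', Or.inl (by simp [Smb])⟩
  | succ n ih =>
      intro L L' hlen hL hL'
      rcases List.eq_nil_or_concat L with rfl | ⟨L₀, a, rfl⟩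
      · rw [Pp_nil, one_mul]
        exact ⟨true, false, L', hL', Or.inl (by simp [Smb])⟩
      rcases L' with _ | ⟨b, L₁⟩
      · rw [Pp_nil, mul_one]
        exact ⟨false, true, L₀.concat a, hL, Or.inl (by simp [Smb])⟩
      -- the interesting case
      have ha : 1 ≤ a ∧ a ≤ q - 1 := hL a (by simp)
      have hb : 1 ≤ b ∧ b ≤ q - 1 := hL' b (by simp)
      have hL₀ : valid q L₀ := fun j hj => hL j (by simp [hj])
      have hL₁ : valid q L₁ := fun j hj => hL' j (by simp [hj])
      have hlen₀ : L₀.length ≤ n := by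
        have := hlen; simp [List.length_concat] at this; omega
      have key : pMat q (a:ℤ) * Sm * pMat q (b:ℤ) = -Pm q ((a:ℝ)+(b:ℝ)) := by
        rw [pMat_nat, pMat_nat]; exact star hq _ _
      have e : Pp q (L₀.concat a) * Sm * Pp q (b :: L₁) =
          Pp q L₀ * (pMat q (a:ℤ) * Sm * pMat q (b:ℤ)) * Pp q L₁ := by
        rw [Pp_concat, Pp_cons]
        simp only [mul_assoc]
      rcases show a + b + 1 ≤ q ∨ a + b = q ∨ q + 1 ≤ a + b by omega with hc | hc | hc
      · -- merge: a+b ≤ q-1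
        have hcast : ((a:ℝ)+(b:ℝ)) = ((a+b : ℕ) : ℝ) := by push_cast; ring
        rw [e, key, hcast, ← pMat_nat]
        refine ⟨false, false, L₀ ++ (a+b) :: L₁, ?_, Or.inr ?_⟩
        · intro j hj
          simp at hj
          rcases hj with hj | rfl | hj
          · exact hL₀ j hj
          · omega
          · exact hL₁ j hj
        · rw [Pp_append, Pp_cons]
          simp only [Smb, cond_false, one_mul, mul_one, mul_neg, neg_mul, mul_assoc]
      · -- cancellation: a+b = q, p_a S p_b = S
        have hcast : ((a:ℝ)+(b:ℝ)) = (q : ℝ) := by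
          rw [show (q:ℝ) = ((a+b : ℕ) : ℝ) by rw [hc], Nat.cast_add]
        rw [e, key, hcast, Pm_qq hq, neg_neg]
        have e2 : Pp q L₀ * Sm * Pp q L₁ = Pp q L₀ * Sm * Pp q L₁ := rfl
        exact (by exact ih L₀ L₁ hlen₀ hL₀ hL₁ : NF q (Pp q L₀ * Sm * Pp q L₁))
      · -- wraparound: a+b > q
        have hq2 : a + b - q + q = a + b := by omega
        have hcast : ((a:ℝ)+(b:ℝ)) = ((a+b-q : ℕ) : ℝ) + (q:ℝ) := by
          rw [show ((a+b-q : ℕ) : ℝ) + (q:ℝ) = ((a+b-q+q : ℕ) : ℝ) by push_cast; ring, hq2]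
          push_cast; ring
        rw [e, key, hcast, Pm_shift hq, neg_neg, ← pMat_nat]
        refine ⟨false, false, L₀ ++ (a+b-q) :: L₁, ?_, Or.inl ?_⟩
        · intro j hj
          simp at hj
          rcases hj with hj | rfl | hj
          · exact hL₀ j hj
          · omega
          · exact hL₁ j hj
        · rw [Pp_append, Pp_cons]
          simp only [Smb, cond_false, one_mul, mul_one, mul_assoc]

lemma NF_smul_cond {z} (δ : Bool) (h : NF q z) : NF q (Smb δ * z) := by
  cases δ
  · simpa [Smb] using h
  · simpa [Smb] using NF_Sm_mul h

lemma NF_mul_Pp (hq : 3 ≤ q) {m} (h : NF q m) {L : List ℕ} (hL : valid q L) :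
    NF q (m * Pp q L) := by
  obtain ⟨δ, δ', L₁, hL₁, hm | hm⟩ := h <;> subst hm <;> cases δ'
  · refine ⟨δ, false, L₁ ++ L, ?_, Or.inl ?_⟩
    · intro j hj; rcases List.mem_append.mp hj with hj | hj
      · exact hL₁ j hj
      · exact hL j hj
    · rw [Pp_append]; simp [Smb, mul_assoc]
  · have : Smb δ * Pp q L₁ * Smb true * Pp q L = Smb δ * (Pp q L₁ * Sm * Pp q L) := by
      simp [Smb, mul_assoc]
    rw [this]
    exact NF_smul_cond δ (keyred hq _ L₁ L le_rfl hL₁ hL)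
  · rw [neg_mul]
    apply NF_neg
    refine ⟨δ, false, L₁ ++ L, ?_, Or.inl ?_⟩
    · intro j hj; rcases List.mem_append.mp hj with hj | hj
      · exact hL₁ j hj
      · exact hL j hj
    · rw [Pp_append]; simp [Smb, mul_assoc]
  · rw [neg_mul]
    apply NF_neg
    have : Smb δ * Pp q L₁ * Smb true * Pp q L = Smb δ * (Pp q L₁ * Sm * Pp q L) := by
      simp [Smb, mul_assoc]
    rw [this]
    exact NF_smul_cond δ (keyred hq _ L₁ L le_rfl hL₁ hL)

lemma NF_mul_cond {z} (δ : Bool) (h : NF q z) : NF q (z * Smb δ) := by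
  cases δ
  · simpa [Smb] using h
  · simpa [Smb] using NF_mul_Sm h

lemma NF_mul (hq : 3 ≤ q) {x y} (hx : NF q x) (hy : NF q y) : NF q (x * y) := by
  obtain ⟨δ, δ', L, hL, hm | hm⟩ := hy <;> subst hm
  · have : x * (Smb δ * Pp q L * Smb δ') = ((x * Smb δ) * Pp q L) * Smb δ' := by
      simp [mul_assoc]
    rw [this]
    exact NF_mul_cond δ' (NF_mul_Pp hq (NF_mul_cond δ hx) hL)
  · rw [mul_neg]
    apply NF_neg
    have : x * (Smb δ * Pp q L * Smb δ') = ((x * Smb δ) * Pp q L) * Smb δ' := by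
      simp [mul_assoc]
    rw [this]
    exact NF_mul_cond δ' (NF_mul_Pp hq (NF_mul_cond δ hx) hL)

lemma Smat_eq : (Smat : Matrix (Fin 2) (Fin 2) ℝ) = Sm := rfl

lemma Tmat_eq (hq : 3 ≤ q) : (Tmat q : Matrix (Fin 2) (Fin 2) ℝ) = pMat q (1:ℤ) := by
  have hσ : Real.sin (Real.pi / q) ≠ 0 := ne_of_gt (sigma_pos hq)
  rw [pMat_int]
  norm_num
  have h0 : sq q (1:ℝ) = Real.sin (Real.pi / q) := by
    unfold sq; norm_num
  have h2 : sq q ((1:ℝ)+1) = 2 * Real.sin (Real.pi / q) * Real.cos (Real.pi / q) := by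
    unfold sq
    rw [show ((1:ℝ)+1) * Real.pi / q = 2 * (Real.pi / q) from by push_cast; ring,
        Real.sin_two_mul]
  have hm : sq q ((1:ℝ)-1) = 0 := by
    unfold sq; norm_num
  unfold Pm Tmat
  rw [h0, h2, hm]
  ext i j
  fin_cases i <;> fin_cases j <;> simp [Matrix.smul_apply] <;> field_simp <;> ring

lemma NF_one : NF q 1 := ⟨false, false, [], by intro k hk; simp at hk, Or.inl (by simp [Smb, Pp_nil])⟩

lemma NF_Smat : NF q (Smat : Matrix (Fin 2) (Fin 2) ℝ) :=
  ⟨true, false, [], by intro k hk; simp at hk, Or.inl (by simp [Smb, Pp_nil, Smat_eq])⟩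

lemma NF_Tmat (hq : 3 ≤ q) : NF q (Tmat q : Matrix (Fin 2) (Fin 2) ℝ) := by
  refine ⟨false, false, [1], ?_, Or.inl ?_⟩
  · intro k hk; simp at hk; omega
  · rw [Tmat_eq hq]
    simp [Smb, Pp]

/-- the conjugate word implementing the inverse -/
def conjL (q : ℕ) (L : List ℕ) : List ℕ := (L.map (fun k => q - k)).reverse

lemma conjL_valid {L : List ℕ} (hq : 3 ≤ q) (hL : valid q L) : valid q (conjL q L) := by
  intro j hj
  simp [conjL] at hj
  obtain ⟨k, hk, rfl⟩ := hj
  have := hL k hk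
  omega

lemma tel (hq : 3 ≤ q) : ∀ {L : List ℕ}, valid q L → Pp q L * Sm * Pp q (conjL q L) = Sm := by
  intro L
  induction L with
  | nil => intro _; simp [conjL, Pp_nil]
  | cons k L ih =>
      intro hL
      have hk := hL k (by simp)
      have hLt : valid q L := fun j hj => hL j (by simp [hj])
      have hc : conjL q (k :: L) = (conjL q L).concat (q - k) := by
        simp [conjL, List.concat_eq_append]
      rw [hc, Pp_concat, Pp_cons]
      have e : pMat q (k:ℤ) * Pp q L * Sm * (Pp q (conjL q L) * pMat q ((q-k : ℕ):ℤ)) =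
          pMat q (k:ℤ) * (Pp q L * Sm * Pp q (conjL q L)) * pMat q ((q-k : ℕ):ℤ) := by
        simp only [mul_assoc]
      rw [e, ih hLt]
      have key : pMat q (k:ℤ) * Sm * pMat q ((q-k : ℕ):ℤ) = -Pm q ((k:ℝ) + ((q-k:ℕ):ℝ)) := by
        rw [pMat_nat, pMat_nat]; exact star hq _ _
      have hcast : (k:ℝ) + ((q-k:ℕ):ℝ) = (q:ℝ) := by
        rw [show (q:ℝ) = ((k + (q-k) : ℕ) : ℝ) from by congr 1; omega]
        push_cast; ring
      rw [key, hcast, Pm_qq hq, neg_neg]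

lemma form_inv (hq : 3 ≤ q) (δ δ' : Bool) {L : List ℕ} (hL : valid q L) :
    (Smb δ * Pp q L * Smb δ') * (Smb (!δ') * Pp q (conjL q L) * Smb (!δ)) = -1 := by
  have mid : ∀ b : Bool, Smb b * Smb (!b) = Sm := by intro b; cases b <;> simp [Smb]
  have e : (Smb δ * Pp q L * Smb δ') * (Smb (!δ') * Pp q (conjL q L) * Smb (!δ)) =
      Smb δ * (Pp q L * (Smb δ' * Smb (!δ')) * Pp q (conjL q L)) * Smb (!δ) := by
    simp only [mul_assoc]
  rw [e, mid, show Pp q L * Sm * Pp q (conjL q L) = Sm from tel hq hL]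
  cases δ <;> simp [Smb, Sm_sq]

lemma NF_inv (hq : 3 ≤ q) (x : SL2) (hx : NF q (x : Matrix (Fin 2) (Fin 2) ℝ)) :
    NF q ((x⁻¹ : SL2) : Matrix (Fin 2) (Fin 2) ℝ) := by
  obtain ⟨δ, δ', L, hL, hm | hm⟩ := hx
  · have h1 : (x : Matrix (Fin 2) (Fin 2) ℝ) *
        (-(Smb (!δ') * Pp q (conjL q L) * Smb (!δ))) = 1 := by
      rw [hm, mul_neg, form_inv hq δ δ' hL, neg_neg]
    have h2 : ((x⁻¹ : SL2) : Matrix (Fin 2) (Fin 2) ℝ) =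
        -(Smb (!δ') * Pp q (conjL q L) * Smb (!δ)) := by
      calc ((x⁻¹ : SL2) : Matrix (Fin 2) (Fin 2) ℝ)
          = ((x⁻¹ : SL2) : Matrix (Fin 2) (Fin 2) ℝ) *
            ((x : Matrix (Fin 2) (Fin 2) ℝ) *
              (-(Smb (!δ') * Pp q (conjL q L) * Smb (!δ)))) := by rw [h1, mul_one]
        _ = (((x⁻¹ * x : SL2)) : Matrix (Fin 2) (Fin 2) ℝ) *
            (-(Smb (!δ') * Pp q (conjL q L) * Smb (!δ))) := by
              rw [Matrix.SpecialLinearGroup.coe_mul]; noncomm_ring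
        _ = -(Smb (!δ') * Pp q (conjL q L) * Smb (!δ)) := by
              rw [inv_mul_cancel]; simp
    rw [h2]
    exact NF_neg ⟨!δ', !δ, conjL q L, conjL_valid hq hL, Or.inl rfl⟩
  · have h1 : (x : Matrix (Fin 2) (Fin 2) ℝ) *
        (Smb (!δ') * Pp q (conjL q L) * Smb (!δ)) = 1 := by
      rw [hm, neg_mul, form_inv hq δ δ' hL, neg_neg]
    have h2 : ((x⁻¹ : SL2) : Matrix (Fin 2) (Fin 2) ℝ) =
        Smb (!δ') * Pp q (conjL q L) * Smb (!δ) := by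
      calc ((x⁻¹ : SL2) : Matrix (Fin 2) (Fin 2) ℝ)
          = ((x⁻¹ : SL2) : Matrix (Fin 2) (Fin 2) ℝ) *
            ((x : Matrix (Fin 2) (Fin 2) ℝ) *
              (Smb (!δ') * Pp q (conjL q L) * Smb (!δ))) := by rw [h1, mul_one]
        _ = (((x⁻¹ * x : SL2)) : Matrix (Fin 2) (Fin 2) ℝ) *
            (Smb (!δ') * Pp q (conjL q L) * Smb (!δ)) := by
              rw [Matrix.SpecialLinearGroup.coe_mul]; noncomm_ring
        _ = Smb (!δ') * Pp q (conjL q L) * Smb (!δ) := by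
              rw [inv_mul_cancel]; simp
    rw [h2]
    exact ⟨!δ', !δ, conjL q L, conjL_valid hq hL, Or.inl rfl⟩

lemma hecke_NF (hq : 3 ≤ q) (h : SL2) (hh : h ∈ Hecke q) :
    NF q (h : Matrix (Fin 2) (Fin 2) ℝ) := by
  induction hh using Subgroup.closure_induction with
  | mem x hx =>
      rcases hx with rfl | rfl
      · exact NF_Smat
      · exact NF_Tmat hq
  | one => simpa [Matrix.SpecialLinearGroup.coe_one] using (NF_one : NF q 1)
  | mul x y hx hy ihx ihy =>
      rw [Matrix.SpecialLinearGroup.coe_mul]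
      exact NF_mul hq ihx ihy
  | inv x hx ih => exact NF_inv hq x ih

lemma pts (X Y : ℝ) : 2 * (Real.sin X * Real.sin Y) = Real.cos (X - Y) - Real.cos (X + Y) := by
  rw [Real.cos_sub, Real.cos_add]; ring

/-- interval monotonicity: for `1 ≤ k < j ≤ q-1`,
`sin(kθ) sin(jθ) ≤ sin((j-1)θ) sin((k+1)θ)` -/
lemma mono (hq : 3 ≤ q) {k j : ℕ} (hk1 : 1 ≤ k) (hkj : k < j) (hj : j ≤ q - 1) :
    sq q (k:ℝ) * sq q (j:ℝ) ≤ sq q ((j:ℝ)-1) * sq q ((k:ℝ)+1) := by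
  have hq0 : (0:ℝ) < q := by positivity
  have hu1 : (1:ℝ) ≤ (j:ℝ) - (k:ℝ) := by
    have : (k:ℝ) + 1 ≤ (j:ℝ) := by exact_mod_cast hkj
    linarith
  have huq : (j:ℝ) - (k:ℝ) ≤ (q:ℝ) := by
    have h1 : (j:ℝ) ≤ (q:ℝ) := by exact_mod_cast by omega
    have h2 : (0:ℝ) ≤ (k:ℝ) := by positivity
    linarith
  have e1 := pts (((j:ℝ)-1) * Real.pi / q) (((k:ℝ)+1) * Real.pi / q)
  rw [show ((j:ℝ)-1) * Real.pi / q - ((k:ℝ)+1) * Real.pi / q =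
        ((j:ℝ)-(k:ℝ)-2) * Real.pi / q from by ring,
      show ((j:ℝ)-1) * Real.pi / q + ((k:ℝ)+1) * Real.pi / q =
        ((j:ℝ)+(k:ℝ)) * Real.pi / q from by ring] at e1
  have e2 := pts ((k:ℝ) * Real.pi / q) ((j:ℝ) * Real.pi / q)
  rw [show (k:ℝ) * Real.pi / q - (j:ℝ) * Real.pi / q =
        -(((j:ℝ)-(k:ℝ)) * Real.pi / q) from by ring, Real.cos_neg,
      show (k:ℝ) * Real.pi / q + (j:ℝ) * Real.pi / q =
        ((j:ℝ)+(k:ℝ)) * Real.pi / q from by ring] at e2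
  have e3 : Real.cos (((j:ℝ)-(k:ℝ)) * Real.pi / q) ≤
      Real.cos (((j:ℝ)-(k:ℝ)-2) * Real.pi / q) := by
    rw [← Real.cos_abs (((j:ℝ)-(k:ℝ)-2) * Real.pi / q)]
    apply Real.cos_le_cos_of_nonneg_of_le_pi (abs_nonneg _)
    · rw [div_le_iff₀ hq0]
      nlinarith [Real.pi_pos]
    · have habs : |((j:ℝ)-(k:ℝ)-2)| ≤ (j:ℝ)-(k:ℝ) := by
        rw [abs_le]; constructor <;> linarith
      have hpq : (0:ℝ) ≤ Real.pi / q := by positivity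
      calc |((j:ℝ)-(k:ℝ)-2) * Real.pi / q| = |(j:ℝ)-(k:ℝ)-2| * (Real.pi / q) := by
            rw [mul_div_assoc, abs_mul, abs_of_nonneg hpq]
        _ ≤ ((j:ℝ)-(k:ℝ)) * (Real.pi / q) := mul_le_mul_of_nonneg_right habs hpq
        _ = ((j:ℝ)-(k:ℝ)) * Real.pi / q := by ring
  unfold sq
  linarith

lemma head_lt_absurd (hq : 3 ≤ q) {k j : ℕ} (hk1 : 1 ≤ k) (hkj : k < j) (hj : j ≤ q - 1)
    {N N' : Matrix (Fin 2) (Fin 2) ℝ} (hN : Pos N) (hN' : Pos N')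
    (heq : pMat q (k:ℤ) * N = pMat q (j:ℤ) * N') : False := by
  have hσ : 0 < Real.sin (Real.pi / q) := sigma_pos hq
  have hk2 : k ≤ q - 1 := by omega
  have hj1 : 1 ≤ j := by omega
  set A := (pMat q (k:ℤ) * N) 0 0 with hA_def
  set C := (pMat q (k:ℤ) * N) 1 0 with hC_def
  have hPosP := Pos_pMat_mul hq hk1 hk2 hN
  have hApos : 0 < A := hPosP.1
  -- identity on the k side
  have eA : A = (Real.sin (Real.pi / q))⁻¹ * sq q (k:ℝ) * N 0 0 +
      (Real.sin (Real.pi / q))⁻¹ * sq q ((k:ℝ)+1) * N 1 0 := by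
    rw [hA_def, pMat_nat, mul_ent, Pm00, Pm01]
  have eC : C = (Real.sin (Real.pi / q))⁻¹ * sq q ((k:ℝ)-1) * N 0 0 +
      (Real.sin (Real.pi / q))⁻¹ * sq q (k:ℝ) * N 1 0 := by
    rw [hC_def, pMat_nat, mul_ent, Pm10, Pm11]
  have I1 : A * sq q (k:ℝ) - C * sq q ((k:ℝ)+1) = Real.sin (Real.pi / q) * N 0 0 := by
    rw [eA, eC]
    have hd := det_id q (k:ℝ)
    field_simp
    linear_combination N 0 0 * hd
  -- identity on the j side
  have eA' : A = (Real.sin (Real.pi / q))⁻¹ * sq q (j:ℝ) * N' 0 0 +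
      (Real.sin (Real.pi / q))⁻¹ * sq q ((j:ℝ)+1) * N' 1 0 := by
    rw [hA_def, heq, pMat_nat, mul_ent, Pm00, Pm01]
  have eC' : C = (Real.sin (Real.pi / q))⁻¹ * sq q ((j:ℝ)-1) * N' 0 0 +
      (Real.sin (Real.pi / q))⁻¹ * sq q (j:ℝ) * N' 1 0 := by
    rw [hC_def, heq, pMat_nat, mul_ent, Pm10, Pm11]
  have I2 : A * sq q ((j:ℝ)-1) - C * sq q (j:ℝ) = -(Real.sin (Real.pi / q) * N' 1 0) := by
    rw [eA', eC']
    have hd := det_id q (j:ℝ)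
    field_simp
    linear_combination (-(N' 1 0)) * hd
  -- positivity of the relevant sines
  have hsk : 0 < sq q (k:ℝ) := sqk_pos hq hk1 hk2
  have hsj : 0 < sq q (j:ℝ) := sqk_pos hq hj1 hj
  have hsk1 : 0 < sq q ((k:ℝ)+1) := by
    apply sq_pos hq (by positivity)
    have : k + 1 < q := by omega
    calc (k:ℝ) + 1 = ((k+1 : ℕ):ℝ) := by push_cast; ring
      _ < q := by exact_mod_cast this
  have hsjm1 : 0 < sq q ((j:ℝ)-1) := by
    apply sq_pos hq
    · have : (2:ℝ) ≤ (j:ℝ) := by exact_mod_cast by omega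
      linarith
    · have : (j:ℝ) < q := by exact_mod_cast by omega
      linarith
  have t1 : C * sq q ((k:ℝ)+1) < A * sq q (k:ℝ) := by
    have := mul_pos hσ hN.1
    linarith
  have t2 : A * sq q ((j:ℝ)-1) ≤ C * sq q (j:ℝ) := by
    have := mul_nonneg hσ.le hN'.2.2.1
    linarith
  have hmono := mono hq hk1 hkj hj
  nlinarith [mul_lt_mul_of_pos_right t1 hsj, mul_le_mul_of_nonneg_right t2 hsk1.le,
    mul_le_mul_of_nonneg_left hmono hApos.le]

lemma head_eq (hq : 3 ≤ q) {k j : ℕ} (hk1 : 1 ≤ k) (hk2 : k ≤ q - 1)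
    (hj1 : 1 ≤ j) (hj2 : j ≤ q - 1)
    {N N' : Matrix (Fin 2) (Fin 2) ℝ} (hN : Pos N) (hN' : Pos N')
    (heq : pMat q (k:ℤ) * N = pMat q (j:ℤ) * N') : k = j := by
  rcases lt_trichotomy k j with hlt | heq' | hlt
  · exact absurd (head_lt_absurd hq hk1 hlt hj2 hN hN' heq) not_false
  · exact heq'
  · exact absurd (head_lt_absurd hq hj1 hlt hk2 hN' hN heq.symm) not_false

lemma Pp_inj (hq : 3 ≤ q) : ∀ (L₁ L₂ : List ℕ), valid q L₁ → valid q L₂ →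
    Pp q L₁ = Pp q L₂ → L₁ = L₂ := by
  intro L₁
  induction L₁ with
  | nil =>
      intro L₂ _ hL₂ heq
      rcases L₂ with _ | ⟨j, L₂⟩
      · rfl
      · exfalso
        have hoff := offdiag_pos hq hL₂ (by simp)
        rw [← heq, Pp_nil] at hoff
        simp [Matrix.one_apply] at hoff
  | cons k L₁ ih =>
      intro L₂ hL₁ hL₂ heq
      rcases L₂ with _ | ⟨j, L₂⟩
      · exfalso
        have hoff := offdiag_pos hq hL₁ (by simp)
        rw [heq, Pp_nil] at hoff
        simp [Matrix.one_apply] at hoff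
      · have hk := hL₁ k (by simp)
        have hj := hL₂ j (by simp)
        have hL₁t : valid q L₁ := fun i hi => hL₁ i (by simp [hi])
        have hL₂t : valid q L₂ := fun i hi => hL₂ i (by simp [hi])
        rw [Pp_cons, Pp_cons] at heq
        have hkj : k = j :=
          head_eq hq hk.1 hk.2 hj.1 hj.2 (Pos_Pp hq hL₁t) (Pos_Pp hq hL₂t) heq
        subst hkj
        have hcanc : Pp q L₁ = Pp q L₂ := by
          have h2 : Pinv q (k:ℝ) * (pMat q (k:ℤ) * Pp q L₁) =
              Pinv q (k:ℝ) * (pMat q (k:ℤ) * Pp q L₂) := by rw [heq]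
          rwa [pMat_nat, ← mul_assoc, ← mul_assoc, Pinv_mul hq, one_mul, one_mul] at h2
        rw [ih L₂ hL₁t hL₂t hcanc]

lemma pos_of_ord (hq : 3 ≤ q) (h : SL2)
    (hord : opLT (mob h ((0 : ℝ) : OnePoint ℝ)) (mob h ∞) ∧
            opLE (((0 : ℝ) : OnePoint ℝ)) (mob h ((0 : ℝ) : OnePoint ℝ))) :
    Pos (h : Matrix (Fin 2) (Fin 2) ℝ) ∨ Pos (-(h : Matrix (Fin 2) (Fin 2) ℝ)) := by
  obtain ⟨hlt, hle⟩ := hord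
  set m := (h : Matrix (Fin 2) (Fin 2) ℝ) with hm_def
  have hdet : m 0 0 * m 1 1 - m 0 1 * m 1 0 = 1 := by
    have := h.2
    rwa [Matrix.det_fin_two] at this
  have e0 : mob h ((0:ℝ) : OnePoint ℝ) =
      if m 1 0 * 0 + m 1 1 = 0 then ∞
      else (((m 0 0 * 0 + m 0 1) / (m 1 0 * 0 + m 1 1) : ℝ) : OnePoint ℝ) := rfl
  have einf : mob h ∞ =
      if m 1 0 = 0 then ∞ else ((m 0 0 / m 1 0 : ℝ) : OnePoint ℝ) := rfl
  by_cases hd0 : m 1 1 = 0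
  · exfalso
    have hz : mob h ((0:ℝ) : OnePoint ℝ) = ∞ := by
      rw [e0, if_pos (by rw [hd0]; ring)]
    rw [hz] at hlt
    exact hlt
  · have hcond : m 1 0 * 0 + m 1 1 ≠ 0 := by intro hc; exact hd0 (by linarith)
    have e0' : mob h ((0:ℝ) : OnePoint ℝ) = ((m 0 1 / m 1 1 : ℝ) : OnePoint ℝ) := by
      rw [e0, if_neg hcond]
      norm_num
    have hble : 0 ≤ m 0 1 / m 1 1 := by
      rw [e0'] at hle
      rcases hle with heq | hlt'
      · have h1 : (0:ℝ) = m 0 1 / m 1 1 := by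
          exact_mod_cast heq
        linarith
      · exact le_of_lt (hlt' : (0:ℝ) < m 0 1 / m 1 1)
    rcases lt_trichotomy (m 1 1) 0 with hdneg | hdz | hdpos
    · -- d < 0 : show Pos (-m)
      right
      have hb : m 0 1 ≤ 0 := by
        rcases div_nonneg_iff.mp hble with ⟨_, h2⟩ | ⟨h1, _⟩
        · linarith
        · exact h1
      by_cases hc0 : m 1 0 = 0
      · have ha : m 0 0 < 0 := by nlinarith
        refine ⟨?_, ?_, ?_, ?_⟩ <;> simp [Matrix.neg_apply, hc0] <;> linarith
      · have hltv : m 0 1 / m 1 1 < m 0 0 / m 1 0 := by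
          rw [e0', einf, if_neg hc0] at hlt
          exact hlt
        rcases lt_trichotomy (m 1 0) 0 with hcneg | hcz | hcpos
        · have hac : 0 < m 0 0 / m 1 0 := lt_of_le_of_lt hble hltv
          have ha : m 0 0 < 0 := by
            rcases div_pos_iff.mp hac with ⟨_, h2⟩ | ⟨h1, _⟩
            · linarith
            · exact h1
          refine ⟨?_, ?_, ?_, ?_⟩ <;> simp [Matrix.neg_apply] <;> linarith
        · exact absurd hcz hc0
        · exfalso
          have hkey : m 0 0 / m 1 0 - m 0 1 / m 1 1 =
              (m 0 0 * m 1 1 - m 0 1 * m 1 0) / (m 1 0 * m 1 1) := by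
            field_simp
          rw [hdet] at hkey
          have hcd : m 1 0 * m 1 1 < 0 := mul_neg_of_pos_of_neg hcpos hdneg
          have : (1:ℝ) / (m 1 0 * m 1 1) < 0 := div_neg_of_pos_of_neg one_pos hcd
          linarith
    · exact absurd hdz hd0
    · -- d > 0 : show Pos m
      left
      have hb : 0 ≤ m 0 1 := by
        rcases div_nonneg_iff.mp hble with ⟨h1, _⟩ | ⟨_, h2⟩
        · exact h1
        · linarith
      by_cases hc0 : m 1 0 = 0
      · have ha : 0 < m 0 0 := by nlinarith
        exact ⟨ha, hb, by rw [hc0], hdpos⟩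
      · have hltv : m 0 1 / m 1 1 < m 0 0 / m 1 0 := by
          rw [e0', einf, if_neg hc0] at hlt
          exact hlt
        rcases lt_trichotomy (m 1 0) 0 with hcneg | hcz | hcpos
        · exfalso
          have hkey : m 0 0 / m 1 0 - m 0 1 / m 1 1 =
              (m 0 0 * m 1 1 - m 0 1 * m 1 0) / (m 1 0 * m 1 1) := by
            field_simp
          rw [hdet] at hkey
          have hcd : m 1 0 * m 1 1 < 0 := mul_neg_of_neg_of_pos hcneg hdpos
          have : (1:ℝ) / (m 1 0 * m 1 1) < 0 := div_neg_of_pos_of_neg one_pos hcd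
          linarith
        · exact absurd hcz hc0
        · have hac : 0 < m 0 0 / m 1 0 := lt_of_le_of_lt hble hltv
          have ha : 0 < m 0 0 := by
            rcases div_pos_iff.mp hac with ⟨h1, _⟩ | ⟨_, h2⟩
            · exact h1
            · linarith
          exact ⟨ha, hb, hcpos.le, hdpos⟩

end St11

/-- if `h ∈ Γ_q` satisfies `h • ∞ > h • 0 ≥ 0` in `ℝ ∪ {∞}`, then there
are unique `ℓ ∈ ℕ₀` and `k₁, …, k_ℓ ∈ {1, …, q−1}` with `h = ±(p_{k₁} ⋯ p_{k_ℓ})`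
(the empty product being the identity matrix). -/
theorem stmt_11 (q : ℕ) (hq : 3 ≤ q) (h : SL2) (hh : h ∈ Hecke q)
    (hord : opLT (mob h ((0 : ℝ) : OnePoint ℝ)) (mob h ∞) ∧
            opLE (((0 : ℝ) : OnePoint ℝ)) (mob h ((0 : ℝ) : OnePoint ℝ))) :
    ∃! L : List ℕ, (∀ k ∈ L, 1 ≤ k ∧ k ≤ q - 1) ∧
      (h.1 = (L.map (fun k => pMat q (k : ℤ))).prod ∨
       h.1 = -((L.map (fun k => pMat q (k : ℤ))).prod)) := by
  classical
  open St11 in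
  obtain ⟨δ, δ', L, hL, hm⟩ := St11.hecke_NF hq h hh
  have hPos := St11.pos_of_ord hq h hord
  have hP := St11.Pos_Pp hq hL
  -- existence core
  have hex : ∃ L', St11.valid q L' ∧
      (h.1 = St11.Pp q L' ∨ h.1 = -(St11.Pp q L')) := by
    cases δ <;> cases δ' <;>
      simp only [St11.Smb, cond_false, cond_true, one_mul, mul_one] at hm
    · exact ⟨L, hL, hm⟩
    · -- h = ±(P·S) : impossible
      exfalso
      have e1 : (St11.Pp q L * St11.Sm) 0 0 = -(St11.Pp q L 0 1) := by
        rw [St11.mul_ent]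
        norm_num [St11.Sm]
      have e2 : (St11.Pp q L * St11.Sm) 0 1 = St11.Pp q L 0 0 := by
        rw [St11.mul_ent]
        norm_num [St11.Sm]
      rcases hm with hm | hm <;> rw [hm] at hPos <;> rcases hPos with hp | hp
      · have := hp.1; rw [e1] at this; linarith [hP.2.1]
      · have := hp.2.1; rw [Matrix.neg_apply, e2] at this; linarith [hP.1]
      · have := hp.2.1
        rw [Matrix.neg_apply, e2] at this; linarith [hP.1]
      · have := hp.1
        rw [neg_neg, e1] at this; linarith [hP.2.1]
    · -- h = ±(S·P) : impossible
      exfalso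
      have e1 : (St11.Sm * St11.Pp q L) 1 1 = -(St11.Pp q L 0 1) := by
        rw [St11.mul_ent]
        norm_num [St11.Sm]
      have e2 : (St11.Sm * St11.Pp q L) 0 0 = St11.Pp q L 1 0 := by
        rw [St11.mul_ent]
        norm_num [St11.Sm]
      have e3 : (St11.Sm * St11.Pp q L) 1 0 = -(St11.Pp q L 0 0) := by
        rw [St11.mul_ent]
        norm_num [St11.Sm]
      rcases hm with hm | hm <;> rw [hm] at hPos <;> rcases hPos with hp | hp
      · have := hp.2.2.2; rw [e1] at this; linarith [hP.2.1]
      · have := hp.1; rw [Matrix.neg_apply, e2] at this; linarith [hP.2.2.1]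
      · have := hp.1; rw [Matrix.neg_apply, e2] at this; linarith [hP.2.2.1]
      · have := hp.2.2.2; rw [neg_neg, e1] at this; linarith [hP.2.1]
    · -- h = ±(S·P·S) : forces P = 1
      have eY0 : (St11.Sm * St11.Pp q L) 1 0 = -(St11.Pp q L 0 0) := by
        rw [St11.mul_ent]; norm_num [St11.Sm]
      have eY1 : (St11.Sm * St11.Pp q L) 1 1 = -(St11.Pp q L 0 1) := by
        rw [St11.mul_ent]; norm_num [St11.Sm]
      have eY2 : (St11.Sm * St11.Pp q L) 0 0 = St11.Pp q L 1 0 := by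
        rw [St11.mul_ent]; norm_num [St11.Sm]
      have eY3 : (St11.Sm * St11.Pp q L) 0 1 = St11.Pp q L 1 1 := by
        rw [St11.mul_ent]; norm_num [St11.Sm]
      have eX00 : (St11.Sm * St11.Pp q L * St11.Sm) 0 0 = -(St11.Pp q L 1 1) := by
        rw [St11.mul_ent ((St11.Sm * St11.Pp q L)) St11.Sm]
        rw [eY2, eY3]
        norm_num [St11.Sm]
      have eX01 : (St11.Sm * St11.Pp q L * St11.Sm) 0 1 = St11.Pp q L 1 0 := by
        rw [St11.mul_ent ((St11.Sm * St11.Pp q L)) St11.Sm]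
        rw [eY2, eY3]
        norm_num [St11.Sm]
      have eX10 : (St11.Sm * St11.Pp q L * St11.Sm) 1 0 = St11.Pp q L 0 1 := by
        rw [St11.mul_ent ((St11.Sm * St11.Pp q L)) St11.Sm]
        rw [eY0, eY1]
        norm_num [St11.Sm]
      have hLnil : L = [] := by
        by_contra hne
        have hoff := St11.offdiag_pos hq hL hne
        rcases hm with hm | hm <;> rw [hm] at hPos <;> rcases hPos with hp | hp
        · have := hp.1; rw [eX00] at this; linarith [hP.2.2.2]
        · have h1 := hp.2.1; have h2 := hp.2.2.1
          rw [Matrix.neg_apply, eX01] at h1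
          rw [Matrix.neg_apply, eX10] at h2
          linarith
        · have h1 := hp.2.1; have h2 := hp.2.2.1
          rw [Matrix.neg_apply, eX01] at h1
          rw [Matrix.neg_apply, eX10] at h2
          linarith
        · have := hp.1; rw [neg_neg, eX00] at this; linarith [hP.2.2.2]
      subst hLnil
      have hSS : St11.Sm * St11.Pp q [] * St11.Sm = -1 := by
        rw [St11.Pp_nil, mul_one, St11.Sm_sq]
      refine ⟨[], fun k hk => absurd hk (by simp), ?_⟩
      rcases hm with hm | hm
      · right
        rw [hm, hSS, St11.Pp_nil]
      · left
        rw [hm, hSS, neg_neg, St11.Pp_nil]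
  obtain ⟨L', hL', hor⟩ := hex
  have hsign : ∀ (La Lb : List ℕ), St11.valid q La → St11.valid q Lb →
      St11.Pp q La = -(St11.Pp q Lb) → False := by
    intro La Lb hLa hLb heq
    have h1 := (St11.Pos_Pp hq hLa).1
    have h2 := (St11.Pos_Pp hq hLb).1
    have := congrFun (congrFun heq 0) 0
    rw [Matrix.neg_apply] at this
    linarith [this]
  refine ⟨L', ⟨hL', hor⟩, ?_⟩
  rintro L₂ ⟨hL₂, hor₂⟩
  apply St11.Pp_inj hq L₂ L' hL₂ hL'
  have hor₂' : h.1 = St11.Pp q L₂ ∨ h.1 = -(St11.Pp q L₂) := hor₂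
  rcases hor with h1 | h1 <;> rcases hor₂' with h2 | h2
  · rw [← h2, h1]
  · exfalso; exact hsign L' L₂ hL' hL₂ (by rw [← h1, h2])
  · exfalso; exact hsign L₂ L' hL₂ hL' (by rw [← h2, h1])
  · have := h1.symm.trans h2
    have h3 : St11.Pp q L' = St11.Pp q L₂ := by
      have h4 := congrArg Neg.neg this
      rwa [neg_neg, neg_neg] at h4
    rw [h3]
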